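/- Let A = [[a_0, 0, 1, 0],[0, a_0, 0, -1],[0,0,a_0,0],[0,0,0,a_0]] with a_0 = ±1, an element of Sp_4(F_q) with respect to β = [[0,I_2],[-I_2,0]]. Then the centralizer of A in Sp_4(F_q) equals { [[C, D·ᵗC^{-1}],[0, ΔCΔ]] : D = ᵗD, C Δ ᵗC = Δ } where Δ = diag(1,-1); in particular the C occurring are exactly the elements of the split orthogonal group O_2^+(F_q). -/

import Mathlib

open Matrix

/-- `g` is symplectic with respect to the skew-symmetric form `β` if `g β ᵗg = β`. -/
def IsSymplectic {m : Type*} [Fintype m] [DecidableEq m] {F : Type*} [Field F]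
    (β : Matrix m m F) (g : GL m F) : Prop :=
  (g : Matrix m m F) * β * (g : Matrix m m F)ᵀ = β

private lemma delta_mul_delta {F : Type*} [Field F] :
    (!![1,0;0,-1] : Matrix (Fin 2) (Fin 2) F) * !![1,0;0,-1] = 1 := by
  ext i j; fin_cases i <;> fin_cases j <;>
    simp [Matrix.mul_apply, Fin.sum_univ_two, Matrix.one_apply]

private lemma delta_transpose {F : Type*} [Field F] :
    (!![1,0;0,-1] : Matrix (Fin 2) (Fin 2) F)ᵀ = !![1,0;0,-1] := by
  ext i j; fin_cases i <;> fin_cases j <;> simp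

/-- The centralizer in `Sp_4(F_q)` (form `β = [[0,I₂],[-I₂,0]]`) of
`A = [[a₀I₂, Δ],[0, a₀I₂]]` with `a₀ = ±1` and `Δ = diag(1,-1)` is
`{ [[C, D·ᵗC⁻¹],[0, ΔCΔ]] : D = ᵗD, C Δ ᵗC = Δ }`; in particular the `C` occurring
are exactly the elements of the split orthogonal group `O₂⁺(F_q)`. -/
theorem stmt_17 (q : ℕ) (hq : IsPrimePow q) (hodd : Odd q)
    (F : Type*) [Field F] [Fintype F] (hF : Fintype.card F = q)
    (a0 : F) (ha0 : a0 = 1 ∨ a0 = -1)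
    (A : GL (Fin 2 ⊕ Fin 2) F)
    (hA : (A : Matrix (Fin 2 ⊕ Fin 2) (Fin 2 ⊕ Fin 2) F) =
      Matrix.fromBlocks (a0 • (1 : Matrix (Fin 2) (Fin 2) F)) (!![1, 0; 0, -1]) 0
        (a0 • (1 : Matrix (Fin 2) (Fin 2) F))) :
    {g : GL (Fin 2 ⊕ Fin 2) F |
        IsSymplectic (Matrix.fromBlocks 0 (1 : Matrix (Fin 2) (Fin 2) F) (-1) 0) g ∧
        g * A = A * g} =
      {g : GL (Fin 2 ⊕ Fin 2) F | ∃ C D : Matrix (Fin 2) (Fin 2) F,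
        D = Dᵀ ∧ C * !![1, 0; 0, -1] * Cᵀ = !![1, 0; 0, -1] ∧
        (g : Matrix (Fin 2 ⊕ Fin 2) (Fin 2 ⊕ Fin 2) F) =
          Matrix.fromBlocks C (D * (Cᵀ)⁻¹) 0
            (!![1, 0; 0, -1] * C * !![1, 0; 0, -1])} := by
  set Δ : Matrix (Fin 2) (Fin 2) F := !![1,0;0,-1] with hΔ
  have hdd : Δ * Δ = 1 := delta_mul_delta
  have hdt : Δᵀ = Δ := delta_transpose
  ext g
  simp only [Set.mem_setOf_eq]
  constructor
  · rintro ⟨hs, hc⟩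
    set M : Matrix (Fin 2 ⊕ Fin 2) (Fin 2 ⊕ Fin 2) F := (g : Matrix (Fin 2 ⊕ Fin 2) (Fin 2 ⊕ Fin 2) F) with hMdef
    set P := M.toBlocks₁₁ with hP
    set Q := M.toBlocks₁₂ with hQ
    set R := M.toBlocks₂₁ with hR
    set S := M.toBlocks₂₂ with hS
    have hM : M = fromBlocks P Q R S := (fromBlocks_toBlocks M).symm
    -- commuting equation at the matrix level
    have hc' : M * (A : Matrix _ _ F) = (A : Matrix _ _ F) * M := by
      have := congrArg (Units.val) hc
      simpa [Units.val_mul] using this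
    rw [hA, hM, fromBlocks_multiply, fromBlocks_multiply] at hc'
    have h11 := congrArg Matrix.toBlocks₁₁ hc'
    have h12 := congrArg Matrix.toBlocks₁₂ hc'
    simp only [toBlocks_fromBlocks₁₁, toBlocks_fromBlocks₁₂, Matrix.mul_zero,
      Matrix.zero_mul, Matrix.mul_smul, Matrix.smul_mul, Matrix.mul_one,
      Matrix.one_mul, add_zero, zero_add] at h11 h12
    -- h11 : a0 • P = a0 • P + Δ * R, so R = 0
    have hR0 : R = 0 := by
      have hΔR : Δ * R = 0 := by
        have := h11.symm
        rwa [add_eq_left] at this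
      calc R = (Δ * Δ) * R := by rw [hdd, Matrix.one_mul]
        _ = Δ * (Δ * R) := by rw [Matrix.mul_assoc]
        _ = 0 := by rw [hΔR, Matrix.mul_zero]
    -- h12 : P * Δ + a0 • Q = a0 • Q + Δ * S, so S = Δ * P * Δ
    have hPD : P * Δ = Δ * S := by
      have := h12
      rw [add_comm (a0 • Q) (Δ * S)] at this
      exact add_right_cancel this
    have hSeq : S = Δ * P * Δ := by
      calc S = (Δ * Δ) * S := by rw [hdd, Matrix.one_mul]
        _ = Δ * (Δ * S) := by rw [Matrix.mul_assoc]
        _ = Δ * (P * Δ) := by rw [hPD]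
        _ = Δ * P * Δ := by rw [Matrix.mul_assoc]
    -- symplectic equation
    have hs' : M * (fromBlocks 0 (1 : Matrix (Fin 2) (Fin 2) F) (-1) 0) * Mᵀ
        = fromBlocks 0 1 (-1) 0 := hs
    rw [hM, fromBlocks_transpose, fromBlocks_multiply, fromBlocks_multiply, hR0] at hs'
    have s11 := congrArg Matrix.toBlocks₁₁ hs'
    have s12 := congrArg Matrix.toBlocks₁₂ hs'
    simp only [toBlocks_fromBlocks₁₁, toBlocks_fromBlocks₁₂, Matrix.mul_zero,
      Matrix.zero_mul, Matrix.mul_one, Matrix.one_mul, mul_neg_one,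
      neg_one_mul, Matrix.mul_neg, Matrix.neg_mul, add_zero, zero_add,
      Matrix.transpose_zero] at s11 s12
    -- s11 : -Q * Pᵀ + P * Qᵀ = 0 (in some form), s12 : P * Sᵀ = 1
    have hPS : P * Sᵀ = 1 := by linear_combination (norm := noncomm_ring) s12
    have hsym : P * Qᵀ = Q * Pᵀ := by linear_combination (norm := noncomm_ring) s11
    -- orthogonality of P
    have hPDP : P * Δ * Pᵀ = Δ := by
      have : P * (Δ * P * Δ)ᵀ = 1 := by rw [← hSeq]; exact hPS
      rw [Matrix.transpose_mul, Matrix.transpose_mul, hdt] at this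
      have key : P * Δ * Pᵀ * Δ = 1 := by
        calc P * Δ * Pᵀ * Δ = P * (Δ * (Pᵀ * Δ)) := by noncomm_ring
          _ = 1 := this
      calc P * Δ * Pᵀ = P * Δ * Pᵀ * (Δ * Δ) := by rw [hdd, Matrix.mul_one]
        _ = (P * Δ * Pᵀ * Δ) * Δ := by noncomm_ring
        _ = 1 * Δ := by rw [key]
        _ = Δ := Matrix.one_mul Δ
    -- P has invertible determinant
    have hdetP : IsUnit Pᵀ.det := by
      have : P.det * Sᵀ.det = 1 := by rw [← det_mul, hPS, det_one]
      rw [Matrix.det_transpose]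
      exact IsUnit.of_mul_eq_one _ this
    refine ⟨P, Q * Pᵀ, ?_, hPDP, ?_⟩
    · rw [Matrix.transpose_mul, Matrix.transpose_transpose, hsym]
    · have hQ' : Q * Pᵀ * Pᵀ⁻¹ = Q := Matrix.mul_nonsing_inv_cancel_right Pᵀ Q hdetP
      rw [hM, hR0, hSeq, hQ']
  · rintro ⟨C, D, hD, hC, hg⟩
    -- C is invertible
    have hdetC : IsUnit C.det := by
      have h0 : C.det * (-1) * C.det = -1 := by
        have := congrArg Matrix.det hC
        rw [det_mul, det_mul, Matrix.det_transpose] at this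
        have hdΔ : Δ.det = -1 := by simp [hΔ]
        rw [hdΔ] at this; exact this
      have h2 : C.det * C.det = 1 := by linear_combination -h0
      exact IsUnit.of_mul_eq_one _ h2
    have hdetCT : IsUnit Cᵀ.det := by rw [Matrix.det_transpose]; exact hdetC
    have hTinv : ((Cᵀ)⁻¹)ᵀ = C⁻¹ := by
      rw [Matrix.transpose_nonsing_inv, Matrix.transpose_transpose]
    have hCCi : C * C⁻¹ = 1 := Matrix.mul_nonsing_inv _ hdetC
    have hQC : D * (Cᵀ)⁻¹ * Cᵀ = D := by
      rw [Matrix.mul_assoc, Matrix.nonsing_inv_mul _ hdetCT, Matrix.mul_one]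
    constructor
    · show (g : Matrix (Fin 2 ⊕ Fin 2) (Fin 2 ⊕ Fin 2) F) * _ * (g : Matrix (Fin 2 ⊕ Fin 2) (Fin 2 ⊕ Fin 2) F)ᵀ = _
      rw [hg, fromBlocks_transpose, fromBlocks_multiply, fromBlocks_multiply]
      have h2 : C * (D * (Cᵀ)⁻¹)ᵀ = D := by
        rw [Matrix.transpose_mul, hTinv, ← Matrix.mul_assoc, hCCi, Matrix.one_mul, ← hD]
      have h3 : C * (Δ * C * Δ)ᵀ = 1 := by
        rw [Matrix.transpose_mul, Matrix.transpose_mul, hdt]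
        calc C * (Δ * (Cᵀ * Δ)) = (C * Δ * Cᵀ) * Δ := by noncomm_ring
          _ = Δ * Δ := by rw [hC]
          _ = 1 := hdd
      have h4 : Δ * C * Δ * Cᵀ = 1 := by
        calc Δ * C * Δ * Cᵀ = Δ * (C * Δ * Cᵀ) := by noncomm_ring
          _ = Δ * Δ := by rw [hC]
          _ = 1 := hdd
      simp only [Matrix.transpose_zero]
      rw [Matrix.fromBlocks_inj]
      refine ⟨?_, ?_, ?_, ?_⟩
      · linear_combination (norm := noncomm_ring) h2 - hQC
      · linear_combination (norm := noncomm_ring) h3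
      · linear_combination (norm := noncomm_ring) -h4
      · noncomm_ring
    · apply Units.ext
      show (g : Matrix (Fin 2 ⊕ Fin 2) (Fin 2 ⊕ Fin 2) F) * (A : Matrix (Fin 2 ⊕ Fin 2) (Fin 2 ⊕ Fin 2) F) = (A : Matrix (Fin 2 ⊕ Fin 2) (Fin 2 ⊕ Fin 2) F) * (g : Matrix (Fin 2 ⊕ Fin 2) (Fin 2 ⊕ Fin 2) F)
      rw [hg, hA, fromBlocks_multiply, fromBlocks_multiply]
      have h5 : Δ * (Δ * C * Δ) = C * Δ := by
        calc Δ * (Δ * C * Δ) = (Δ * Δ) * (C * Δ) := by noncomm_ring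
          _ = C * Δ := by rw [hdd, Matrix.one_mul]
      simp only [Matrix.mul_smul, Matrix.smul_mul, Matrix.mul_one, Matrix.one_mul,
        Matrix.mul_zero, Matrix.zero_mul, add_zero, zero_add, smul_zero]
      rw [Matrix.fromBlocks_inj]
      exact ⟨rfl, by rw [h5, add_comm], rfl, rfl⟩
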